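/- Let F ⊆ L be a finitely generated field extension of transcendence degree 1. Then the space Zar(L|F) of valuation subrings of L containing F is a Noetherian topological space. -/

import Mathlib

/-- The Zariski topology on the set of valuation subrings of a field `K`. -/
instance zariskiTopology (K : Type*) [Field K] : TopologicalSpace (ValuationSubring K) :=
  TopologicalSpace.generateFrom {U | ∃ x : K, U = {V : ValuationSubring K | x ∈ V}}

/-- The Zariski space `Zar(D)`: valuation subrings of `K` containing the image of `D`. -/
def zarSet (D K : Type*) [CommRing D] [Field K] [Algebra D K] : Set (ValuationSubring K) :=
  {V | ∀ d : D, algebraMap D K d ∈ V}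



open Polynomial

lemma vs_self_eq_pow {K : Type*} [Field K] {s : K} (h0 : s ≠ 0) {n : ℕ} (hn : 0 < n) :
    s = s ^ n * (s⁻¹) ^ (n - 1) := by
  have e : s * s ^ (n - 1) = s ^ n := by
    rw [← pow_succ']
    congr 1
    omega
  calc s = s * (s ^ (n - 1) * (s⁻¹) ^ (n - 1)) := by
        rw [← mul_pow, mul_inv_cancel₀ h0, one_pow, mul_one]
    _ = (s * s ^ (n - 1)) * (s⁻¹) ^ (n - 1) := by ring
    _ = s ^ n * (s⁻¹) ^ (n - 1) := by rw [e]

/-- A valuation subring contains `s` whenever it contains a positive power of `s`. -/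
lemma vsub_mem_of_pow_mem {K : Type*} [Field K] (V : ValuationSubring K)
    {s : K} {n : ℕ} (hn : n ≠ 0) (h : s ^ n ∈ V) : s ∈ V := by
  by_contra hs
  have hinv : s⁻¹ ∈ V := (V.mem_or_inv_mem s).resolve_left hs
  have h0 : s ≠ 0 := fun h0 => hs (h0 ▸ V.zero_mem)
  have hmem : s ^ n * (s⁻¹) ^ (n - 1) ∈ V := mul_mem h (pow_mem hinv _)
  exact hs (by rw [vs_self_eq_pow h0 (Nat.pos_of_ne_zero hn)]; exact hmem)

/-- Valuation subrings are integrally closed: a root of a monic polynomial with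
coefficients in `V` lies in `V`. -/
lemma vsub_mem_of_monic_root {K : Type*} [Field K] (V : ValuationSubring K)
    {s : K} {p : K[X]} (hm : p.Monic) (hc : ∀ i, p.coeff i ∈ V) (he : p.eval s = 0) :
    s ∈ V := by
  by_contra hs
  have hinv : s⁻¹ ∈ V := (V.mem_or_inv_mem s).resolve_left hs
  have h0 : s ≠ 0 := fun h0 => hs (h0 ▸ V.zero_mem)
  set n := p.natDegree with hn
  rcases Nat.eq_zero_or_pos n with h | hpos
  · rw [hm.natDegree_eq_zero.mp h] at he
    simp at he
  · have heval : p.eval s = s ^ n + ∑ i ∈ Finset.range n, p.coeff i * s ^ i := by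
      conv_lhs => rw [hm.as_sum]
      rw [eval_add, eval_pow, eval_X, eval_finset_sum]
      simp only [eval_mul, eval_C, eval_pow, eval_X]
      rfl
    have hsn : s ^ n = -∑ i ∈ Finset.range n, p.coeff i * s ^ i := by
      rw [heval] at he
      exact eq_neg_of_add_eq_zero_left he
    have hpow : ∀ i ∈ Finset.range n, s ^ i * (s⁻¹) ^ (n - 1) = (s⁻¹) ^ (n - 1 - i) := by
      intro i hi
      have hi' : i < n := Finset.mem_range.mp hi
      have e1 : (n - 1 - i) + i = n - 1 := by omega
      calc s ^ i * (s⁻¹) ^ (n - 1) = s ^ i * ((s⁻¹) ^ (n - 1 - i) * (s⁻¹) ^ i) := by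
            rw [← pow_add, e1]
        _ = (s⁻¹) ^ (n - 1 - i) * (s ^ i * (s⁻¹) ^ i) := by ring
        _ = (s⁻¹) ^ (n - 1 - i) := by rw [← mul_pow, mul_inv_cancel₀ h0, one_pow, mul_one]
    have hrep : s = -∑ i ∈ Finset.range n, p.coeff i * (s⁻¹) ^ (n - 1 - i) :=
      calc s = s ^ n * (s⁻¹) ^ (n - 1) := vs_self_eq_pow h0 hpos
        _ = (-∑ i ∈ Finset.range n, p.coeff i * s ^ i) * (s⁻¹) ^ (n - 1) := by rw [hsn]
        _ = -∑ i ∈ Finset.range n, p.coeff i * (s⁻¹) ^ (n - 1 - i) := by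
            rw [neg_mul, Finset.sum_mul, neg_inj]
            exact Finset.sum_congr rfl fun i hi => by rw [mul_assoc, hpow i hi]
    rw [hrep] at hs
    exact hs (neg_mem (sum_mem fun i _ =>
      mul_mem (hc i) (pow_mem hinv _)))

/-- A topology in which every nonempty open set has finite complement is Noetherian. -/
lemma noetherianSpace_of_isOpen_empty_or_compl_finite {α : Type*} [TopologicalSpace α]
    (h : ∀ U : Set α, IsOpen U → U = ∅ ∨ Uᶜ.Finite) :
    TopologicalSpace.NoetherianSpace α := by
  rw [TopologicalSpace.noetherianSpace_iff_isCompact]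
  intro s
  classical
  refine isCompact_of_finite_subcover fun {ι} U hU hsub => ?_
  rcases s.eq_empty_or_nonempty with rfl | ⟨a, ha⟩
  · exact ⟨∅, by simp⟩
  · obtain ⟨i₀, hi₀⟩ := Set.mem_iUnion.mp (hsub ha)
    have hne : U i₀ ≠ ∅ := fun he => by rw [he] at hi₀; exact hi₀
    have hfin : (U i₀)ᶜ.Finite := (h _ (hU i₀)).resolve_left hne
    have hsd : (s \ U i₀).Finite := hfin.subset fun z hz => hz.2
    have hch : ∀ z : ↥(s \ U i₀), ∃ i, (z : α) ∈ U i := fun z =>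
      Set.mem_iUnion.mp (hsub z.2.1)
    choose g hg using hch
    haveI := hsd.fintype
    refine ⟨insert i₀ (Finset.univ.image g), fun z hz => ?_⟩
    by_cases hzU : z ∈ U i₀
    · exact Set.mem_biUnion (Finset.mem_insert_self _ _) hzU
    · refine Set.mem_biUnion (Finset.mem_insert_of_mem ?_) (hg ⟨z, hz, hzU⟩)
      exact Finset.mem_image_of_mem g (Finset.mem_univ _)

/-- Characterization of units of a valuation subring. -/
lemma vsub_isUnit_iff {S : Type*} [Field S] (W : ValuationSubring S) (w : W) :
    IsUnit w ↔ ((w : S) ≠ 0 ∧ ((w : S))⁻¹ ∈ W) := by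
  constructor
  · rintro ⟨u, rfl⟩
    have h1 : ((u : W) : S) * (((u⁻¹ : Wˣ) : W) : S) = 1 := by
      have : ((u * u⁻¹ : Wˣ) : W) = 1 := by rw [mul_inv_cancel]; rfl
      calc ((u : W) : S) * (((u⁻¹ : Wˣ) : W) : S) = (((u * u⁻¹ : Wˣ) : W) : S) := by norm_cast
        _ = 1 := by rw [this]; rfl
    refine ⟨left_ne_zero_of_mul_eq_one h1, ?_⟩
    rw [← (eq_inv_of_mul_eq_one_right h1)]
    exact (((u⁻¹ : Wˣ) : W)).2
  · rintro ⟨h0, hinv⟩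
    refine IsUnit.of_mul_eq_one (a := w) ⟨(w : S)⁻¹, hinv⟩ (Subtype.ext ?_)
    push_cast
    exact mul_inv_cancel₀ h0

/-- For a purely inseparable extension `L / S`, restriction of valuation subrings is
injective. -/
lemma vsub_comap_injective_of_purelyInseparable
    {S L : Type*} [Field S] [Field L] [Algebra S L] [IsPurelyInseparable S L]
    {V₁ V₂ : ValuationSubring L}
    (h : V₁.comap (algebraMap S L) = V₂.comap (algebraMap S L)) : V₁ = V₂ := by
  have key : ∀ A B : ValuationSubring L, A.comap (algebraMap S L) = B.comap (algebraMap S L) →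
      ∀ z : L, z ∈ A → z ∈ B := by
    intro A B hAB z hz
    obtain ⟨n, hn⟩ := IsPurelyInseparable.pow_mem S (ringExpChar S) z
    obtain ⟨t, ht⟩ := hn
    have h1 : z ^ ringExpChar S ^ n ∈ A := pow_mem hz _
    rw [← ht] at h1
    have h2 : t ∈ B.comap (algebraMap S L) := by rw [← hAB]; exact h1
    have h3 : z ^ ringExpChar S ^ n ∈ B := by
      rw [← ht]; exact h2
    exact vsub_mem_of_pow_mem B (pow_ne_zero n (expChar_pos S (ringExpChar S)).ne') h3
  exact SetLike.ext fun z => ⟨key _ _ h z, key _ _ h.symm z⟩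

open IsDedekindDomain in
/-- Core finiteness: over a Dedekind domain `B` with fraction field `S`, there are only
finitely many valuation subrings of `S` containing `B` in which a fixed nonzero `y : B`
becomes a nonunit. -/
lemma coreA {B S : Type*} [CommRing B] [IsDomain B] [IsDedekindDomain B] [Field S]
    [Algebra B S] [IsFractionRing B S] {y : B} (hy : y ≠ 0) :
    {W : ValuationSubring S | (∀ b : B, algebraMap B S b ∈ W) ∧
      (algebraMap B S y)⁻¹ ∉ W}.Finite := by
  classical
  have halg_inj : Function.Injective (algebraMap B S) := IsFractionRing.injective B S
  set T := {W : ValuationSubring S | (∀ b : B, algebraMap B S b ∈ W) ∧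
      (algebraMap B S y)⁻¹ ∉ W} with hT
  let φ : ∀ W : ValuationSubring S, (∀ b : B, algebraMap B S b ∈ W) → (B →+* W) :=
    fun W hW => (algebraMap B S).codRestrict W.toSubring hW
  let ctr : ∀ W : ValuationSubring S, (∀ b : B, algebraMap B S b ∈ W) → Ideal B :=
    fun W hW => (IsLocalRing.maximalIdeal W).comap (φ W hW)
  have hprime : ∀ (W : ValuationSubring S) (hW : ∀ b : B, algebraMap B S b ∈ W),
      (ctr W hW).IsPrime := fun W hW => Ideal.IsPrime.comap _
  have hmemp : ∀ (W : ValuationSubring S) (hW : ∀ b : B, algebraMap B S b ∈ W) (b : B),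
      b ∈ ctr W hW ↔ ¬ (algebraMap B S b ≠ 0 ∧ (algebraMap B S b)⁻¹ ∈ W) := by
    intro W hW b
    rw [show (b ∈ ctr W hW) = (φ W hW b ∈ IsLocalRing.maximalIdeal W) from rfl,
      IsLocalRing.mem_maximalIdeal, mem_nonunits_iff]
    constructor
    · intro h1 h2
      exact h1 ((vsub_isUnit_iff W _).mpr h2)
    · intro h1 h2
      exact h1 ((vsub_isUnit_iff W _).mp h2)
  have hymem : ∀ (W : ValuationSubring S) (hW : W ∈ T), y ∈ ctr W hW.1 := by
    intro W hW
    rw [hmemp W hW.1 y]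
    rintro ⟨-, h2⟩
    exact hW.2 h2
  have hbot : ∀ (W : ValuationSubring S) (hW : W ∈ T), ctr W hW.1 ≠ ⊥ := by
    intro W hW h
    have := hymem W hW
    rw [h] at this
    exact hy (Ideal.mem_bot.mp this)
  -- membership characterization
  have main : ∀ (W : ValuationSubring S) (hW : W ∈ T) (s : S),
      s ∈ W ↔ ∃ a b : B, b ∉ ctr W hW.1 ∧ s * algebraMap B S b = algebraMap B S a := by
    intro W hW s
    haveI hpPrime : (ctr W hW.1).IsPrime := hprime W hW.1
    set p := ctr W hW.1 with hp
    have hpbot : p ≠ ⊥ := hbot W hW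
    letI : Algebra (Localization.AtPrime p) S :=
      IsLocalization.localizationAlgebraOfSubmonoidLe _ _ p.primeCompl (nonZeroDivisors B)
        p.primeCompl_le_nonZeroDivisors
    haveI : IsScalarTower B (Localization.AtPrime p) S :=
      IsLocalization.localization_isScalarTower_of_submonoid_le _ _ _ _ _
    haveI : IsFractionRing (Localization.AtPrime p) S :=
      IsFractionRing.isFractionRing_of_isDomain_of_isLocalization p.primeCompl _ _
    haveI : IsDiscreteValuationRing (Localization.AtPrime p) :=
      IsLocalization.AtPrime.isDiscreteValuationRing_of_dedekind_domain B hpbot _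
    haveI : ValuationRing (Localization.AtPrime p) := inferInstance
    have hbne : ∀ b : B, b ∉ p → algebraMap B S b ≠ 0 := by
      intro b hbp h0
      have : b = 0 := halg_inj (by rw [h0, map_zero])
      exact hbp (this ▸ p.zero_mem)
    have hbinvW : ∀ b : B, b ∉ p → (algebraMap B S b)⁻¹ ∈ W := by
      intro b hbp
      by_contra hcon
      exact hbp ((hmemp W hW.1 b).mpr (fun h => hcon h.2))
    constructor
    · intro hs
      rcases eq_or_ne s 0 with rfl | hs0
      · refine ⟨0, 1, fun h => hpPrime.ne_top (Ideal.eq_top_of_isUnit_mem p h isUnit_one), by simp⟩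
      rcases ValuationRing.isInteger_or_isInteger (Localization.AtPrime p) s with h | h
      · obtain ⟨o, ho⟩ := h
        obtain ⟨⟨a, b⟩, e⟩ := IsLocalization.surj p.primeCompl o
        refine ⟨a, b, b.2, ?_⟩
        have e' := congrArg (algebraMap (Localization.AtPrime p) S) e
        rw [map_mul, ho, ← IsScalarTower.algebraMap_apply, ← IsScalarTower.algebraMap_apply] at e'
        exact e'
      · obtain ⟨o, ho⟩ := h
        by_cases hu : IsUnit o
        · obtain ⟨u, rfl⟩ := hu
          obtain ⟨⟨a, b⟩, e⟩ := IsLocalization.surj p.primeCompl ((u⁻¹ : _ˣ) : Localization.AtPrime p)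
          refine ⟨a, b, b.2, ?_⟩
          have hinv : algebraMap (Localization.AtPrime p) S ((u⁻¹ : _ˣ) : Localization.AtPrime p)
              = s := by
            have h1 : algebraMap (Localization.AtPrime p) S (u : Localization.AtPrime p) *
                algebraMap (Localization.AtPrime p) S ((u⁻¹ : _ˣ) : Localization.AtPrime p) = 1 := by
              rw [← map_mul]
              norm_cast
              rw [mul_inv_cancel]
              exact map_one _
            rw [ho] at h1
            have h2 := congrArg (s * ·) h1
            rw [← mul_assoc, mul_inv_cancel₀ hs0, one_mul, mul_one] at h2
            exact h2
          have e' := congrArg (algebraMap (Localization.AtPrime p) S) e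
          rw [map_mul, hinv, ← IsScalarTower.algebraMap_apply, ← IsScalarTower.algebraMap_apply]
            at e'
          exact e'
        · exfalso
          obtain ⟨⟨a, b⟩, rfl⟩ := IsLocalization.mk'_surjective p.primeCompl o
          have ha : a ∈ p := by
            by_contra ha
            exact hu ((IsLocalization.AtPrime.isUnit_mk'_iff _ _ a b).mpr ha)
          have e := IsLocalization.mk'_spec (Localization.AtPrime p) a b
          have e' := congrArg (algebraMap (Localization.AtPrime p) S) e
          rw [map_mul, ho, ← IsScalarTower.algebraMap_apply, ← IsScalarTower.algebraMap_apply]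
            at e'
          -- e' : s⁻¹ * algebraMap B S ↑b = algebraMap B S a
          have hb0 : algebraMap B S (b : B) ≠ 0 := hbne _ b.2
          have ha0 : algebraMap B S a ≠ 0 := by
            intro h0
            rw [h0] at e'
            rcases mul_eq_zero.mp e' with h | h
            · exact hs0 (inv_eq_zero.mp h)
            · exact hb0 h
          have hainv : (algebraMap B S a)⁻¹ ∈ W := by
            have heq : (algebraMap B S a)⁻¹ = s * (algebraMap B S (b : B))⁻¹ := by
              rw [← e', mul_inv, inv_inv]
            rw [heq]
            exact mul_mem hs (hbinvW _ b.2)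
          exact (hmemp W hW.1 a).mp ha ⟨ha0, hainv⟩
    · rintro ⟨a, b, hb, heq⟩
      have hb0 : algebraMap B S b ≠ 0 := hbne _ hb
      have : s = algebraMap B S a * (algebraMap B S b)⁻¹ := by
        rw [← heq, mul_assoc, mul_inv_cancel₀ hb0, mul_one]
      rw [this]
      exact mul_mem (hW.1 a) (hbinvW _ hb)
  -- finiteness via height-one primes
  have hspan : (Ideal.span {y} : Ideal B) ≠ ⊥ := by
    simpa [Ideal.span_singleton_eq_bot] using hy
  have hfin : {v : HeightOneSpectrum B | v.asIdeal ∣ Ideal.span {y}}.Finite :=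
    Ideal.finite_factors hspan
  set f : ValuationSubring S → Option (HeightOneSpectrum B) := fun W =>
    if h : W ∈ T then some ⟨ctr W h.1, hprime W h.1, hbot W h⟩ else none with hf
  refine Set.Finite.of_finite_image (f := f) ?_ ?_
  · refine Set.Finite.subset (hfin.image some) ?_
    rintro _ ⟨W, hWT, rfl⟩
    refine ⟨⟨ctr W hWT.1, hprime W hWT.1, hbot W hWT⟩, ?_, by rw [hf]; simp [hWT]⟩
    show (ctr W hWT.1 : Ideal B) ∣ Ideal.span {y}
    rw [Ideal.dvd_iff_le, Ideal.span_le, Set.singleton_subset_iff]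
    exact hymem W hWT
  · intro W₁ hW₁ W₂ hW₂ heq
    rw [hf] at heq
    simp only [dif_pos hW₁, dif_pos hW₂, Option.some_inj] at heq
    have hctr : ctr W₁ hW₁.1 = ctr W₂ hW₂.1 := congrArg HeightOneSpectrum.asIdeal heq
    refine SetLike.ext fun s => ?_
    rw [main W₁ hW₁ s, main W₂ hW₂ s, hctr]
set_option maxHeartbeats 1000000 in
set_option synthInstance.maxHeartbeats 400000 in
open Polynomial IntermediateField in
/-- Main finiteness: in a finitely generated field extension of transcendence degree ≤ 1,
each element `x` fails to lie in only finitely many valuation subrings containing `F`. -/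
lemma keyFinite (F L : Type*) [Field F] [Field L] [Algebra F L]
    (hfg : ∃ s : Finset L, IntermediateField.adjoin F (s : Set L) = ⊤)
    (htr2 : ∀ x y : L, ¬ AlgebraicIndependent F ![x, y]) (x : L) :
    {V : ValuationSubring L | (∀ d : F, algebraMap F L d ∈ V) ∧ x ∉ V}.Finite := by
  classical
  by_cases hx : IsAlgebraic F x
  · convert Set.finite_empty
    ext V
    simp only [Set.mem_setOf_eq, Set.mem_empty_iff_false, iff_false, not_and]
    intro hVF hxV
    apply hxV
    have hint : IsIntegral F x := hx.isIntegral
    refine vsub_mem_of_monic_root V (p := (minpoly F x).map (algebraMap F L))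
      ((minpoly.monic hint).map _) (fun i => by rw [Polynomial.coeff_map]; exact hVF _) ?_
    rw [Polynomial.eval_map, ← Polynomial.aeval_def, minpoly.aeval]
  · -- x transcendental over F
    have hx' : Transcendental F x := hx
    have hx0 : x ≠ 0 := by rintro rfl; exact hx isAlgebraic_zero
    set y := x⁻¹ with hy_def
    have hy' : Transcendental F y := fun h => hx (by
      have := IsAlgebraic.inv_iff.mpr h
      simpa [hy_def, inv_inv] using this)
    have hy0 : y ≠ 0 := inv_ne_zero hx0
    set K : IntermediateField F L := IntermediateField.adjoin F {y} with hK
    have hyK : y ∈ K := IntermediateField.mem_adjoin_simple_self F y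
    have hxK : x ∈ K := by
      have := K.inv_mem hyK
      rwa [hy_def, inv_inv] at this
    -- every element of L is algebraic over K
    have halgK : ∀ z : L, IsAlgebraic K z := by
      intro z
      by_contra hz
      have htransK : Transcendental K z := hz
      have hrange : Set.range ![y] = {y} := by
        ext w
        simp [Matrix.range_cons, Matrix.range_empty]
      have htransA : Transcendental (Algebra.adjoin F (Set.range ![y])) z := by
        rw [hrange]
        have hle : Algebra.adjoin F {y} ≤ K.toSubalgebra :=
          Algebra.adjoin_le (by simpa using hyK)
        have h2 : Transcendental K.toSubalgebra z := htransK
        exact h2.of_tower_top_of_subalgebra_le hle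
      have hyInd : AlgebraicIndependent F ![y] :=
        algebraicIndependent_iff_transcendental.mpr hy'
      have hOpt : AlgebraicIndependent F (fun o : Option (Fin 1) => o.elim z ![y]) :=
        (hyInd.option_iff_transcendental z).mpr htransA
      have hinj : Function.Injective (fun i : Fin 2 => if i = 0 then (some 0 : Option (Fin 1)) else none) := by
        intro i j hij
        fin_cases i <;> fin_cases j <;> simp_all
      have hcomp := hOpt.comp _ hinj
      apply htr2 y z
      have : ((fun o : Option (Fin 1) => o.elim z ![y]) ∘
          fun i : Fin 2 => if i = 0 then (some 0 : Option (Fin 1)) else none) = ![y, z] := by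
        funext i
        fin_cases i <;> rfl
      rwa [this] at hcomp
    -- finite dimensionality of L over K
    obtain ⟨s, hs⟩ := hfg
    have htop : IntermediateField.adjoin K (s : Set L) = ⊤ := by
      have h1 : IntermediateField.adjoin F ((K : Set L) ∪ (s : Set L)) = ⊤ :=
        top_unique (by rw [← hs]; exact IntermediateField.adjoin.mono F _ _ Set.subset_union_right)
      have h2 := (IntermediateField.restrictScalars_adjoin (F := F) K (s : Set L)).trans h1
      apply IntermediateField.restrictScalars_injective F
      rw [h2]
      rfl
    haveI hfd1 : FiniteDimensional K (IntermediateField.adjoin K (s : Set L)) :=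
      IntermediateField.finiteDimensional_adjoin (fun z _ => (halgK z).isIntegral)
    haveI hfdKL : FiniteDimensional K L := by
      haveI h1 : FiniteDimensional K (⊤ : IntermediateField K L) := htop ▸ hfd1
      exact (IntermediateField.topEquiv (F := K) (E := L)).toLinearEquiv.finiteDimensional
    -- separable closure
    set S := separableClosure K L with hSdef
    haveI : Algebra.IsAlgebraic K L := Algebra.IsAlgebraic.of_finite K L
    haveI : IsPurelyInseparable S L := separableClosure.isPurelyInseparable K L
    haveI : FiniteDimensional K S := FiniteDimensional.left K S L
    -- polynomial ring setup
    set yK : K := ⟨y, hyK⟩ with hyKdef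
    letI : Algebra (Polynomial F) K := (Polynomial.aeval yK).toRingHom.toAlgebra
    letI : Algebra (Polynomial F) S :=
      ((algebraMap K S).comp (Polynomial.aeval yK).toRingHom).toAlgebra
    haveI : IsScalarTower (Polynomial F) K S := IsScalarTower.of_algebraMap_eq' rfl
    have haevalK : ∀ q : Polynomial F, ((Polynomial.aeval yK q : K) : L) = Polynomial.aeval y q := by
      intro q
      have h1 : Polynomial.aeval ((algebraMap K L) yK) q
          = (algebraMap K L) (Polynomial.aeval yK q) := Polynomial.aeval_algebraMap_apply L yK q
      have h2 : (algebraMap K L) yK = y := rfl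
      rw [h2] at h1
      exact h1.symm
    have hainj : Function.Injective (Polynomial.aeval y : Polynomial F →ₐ[F] L) :=
      transcendental_iff_injective.mp hy'
    haveI : IsFractionRing (Polynomial F) K := by
      refine ⟨?_, ?_, ?_⟩
      · rintro ⟨q, hq⟩
        have hq0 : q ≠ 0 := nonZeroDivisors.ne_zero hq
        have hne : (algebraMap (Polynomial F) K q) ≠ 0 := by
          intro h0
          apply hq0
          apply hainj
          have : ((Polynomial.aeval yK q : K) : L) = 0 := by
            rw [show (Polynomial.aeval yK q : K) = algebraMap (Polynomial F) K q from rfl, h0]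
            rfl
          rw [haevalK] at this
          simpa using this
        exact isUnit_iff_ne_zero.mpr hne
      · intro z
        obtain ⟨r, q, hz⟩ := (IntermediateField.mem_adjoin_simple_iff F (z : L)).mp z.2
        by_cases hq0 : Polynomial.aeval y q = 0
        · refine ⟨(0, 1), ?_⟩
          have hz0 : (z : L) = 0 := by rw [hz, hq0, div_zero]
          have : z = 0 := by exact_mod_cast hz0
          simp [this]
        · have hq' : q ≠ 0 := fun h => hq0 (by rw [h]; simp)
          refine ⟨(r, ⟨q, mem_nonZeroDivisors_of_ne_zero hq'⟩), ?_⟩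
          have : ((z * algebraMap (Polynomial F) K q : K) : L)
              = ((algebraMap (Polynomial F) K r : K) : L) := by
            push_cast
            rw [show ((algebraMap (Polynomial F) K q : K) : L) = Polynomial.aeval y q from haevalK q,
              show ((algebraMap (Polynomial F) K r : K) : L) = Polynomial.aeval y r from haevalK r,
              hz, div_mul_cancel₀ _ hq0]
          exact_mod_cast this
      · intro r q h
        refine ⟨1, ?_⟩
        have : Polynomial.aeval y r = Polynomial.aeval y q := by
          rw [← haevalK, ← haevalK]
          exact congrArg _ h
        rw [hainj this]
    -- the Dedekind domain B
    set B := integralClosure (Polynomial F) S with hB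
    haveI : IsDedekindDomain B := integralClosure.isDedekindDomain (Polynomial F) K S
    haveI : IsFractionRing B S :=
      IsIntegralClosure.isFractionRing_of_finite_extension (Polynomial F) K S B
    set bY : B := ⟨algebraMap (Polynomial F) S Polynomial.X, isIntegral_algebraMap⟩ with hbY
    have hASX : algebraMap (Polynomial F) S Polynomial.X = algebraMap K S yK := by
      show (algebraMap K S) (Polynomial.aeval yK Polynomial.X) = algebraMap K S yK
      rw [Polynomial.aeval_X]
    have hbY0 : bY ≠ 0 := by
      intro h
      have h1 : algebraMap (Polynomial F) S Polynomial.X = 0 := by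
        have := congrArg (Subtype.val) h
        exact this
      rw [hASX] at h1
      have h2 : yK = 0 := (algebraMap K S).injective (h1.trans (map_zero _).symm)
      exact hy0 (by simpa [hyKdef] using congrArg Subtype.val h2)
    have hcore := coreA (B := B) (S := S) (y := bY) hbY0
    set Φ : ValuationSubring L → ValuationSubring S :=
      fun V => V.comap (algebraMap S L) with hPhi
    refine Set.Finite.of_finite_image (f := Φ) (Set.Finite.subset hcore ?_) ?_
    · rintro _ ⟨V, ⟨hVF, hVx⟩, rfl⟩
      have hy_in_V : y ∈ V := (V.mem_or_inv_mem x).resolve_left hVx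
      have hav : ∀ r : Polynomial F, Polynomial.aeval y r ∈ V := by
        intro r
        induction r using Polynomial.induction_on with
        | C a => simpa using hVF a
        | add p q hp hq => simpa [map_add] using add_mem hp hq
        | monomial n a ih =>
          have heq : (Polynomial.aeval y) (Polynomial.C a * Polynomial.X ^ (n + 1))
              = algebraMap F L a * y ^ (n + 1) := by simp
          rw [heq]
          exact mul_mem (hVF a) (pow_mem hy_in_V _)
      have hRV : ∀ r : Polynomial F, (algebraMap S L) (algebraMap (Polynomial F) S r) ∈ V := by
        intro r
        have heq : (algebraMap S L) (algebraMap (Polynomial F) S r) = Polynomial.aeval y r := by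
          show (algebraMap S L) ((algebraMap K S) (Polynomial.aeval yK r)) = _
          rw [← IsScalarTower.algebraMap_apply K S L]
          exact haevalK r
        rw [heq]
        exact hav r
      constructor
      · intro b
        rw [ValuationSubring.mem_comap]
        obtain ⟨pb, pbmonic, pbev⟩ := b.2
        set ρ : Polynomial F →+* L := (algebraMap S L).comp (algebraMap (Polynomial F) S) with hρ
        refine vsub_mem_of_monic_root V (p := pb.map ρ) (pbmonic.map ρ)
          (fun i => by rw [Polynomial.coeff_map]; exact hRV _) ?_
        rw [Polynomial.eval_map]
        have := congrArg (algebraMap S L) pbev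
        rw [Polynomial.hom_eval₂, map_zero] at this
        exact this
      · intro hmem
        apply hVx
        rw [ValuationSubring.mem_comap] at hmem
        have h1 : (algebraMap B S bY) = algebraMap K S yK := hASX
        rw [h1, map_inv₀] at hmem
        rw [← IsScalarTower.algebraMap_apply K S L] at hmem
        have h2 : (algebraMap K L) yK = y := rfl
        rw [h2, hy_def, inv_inv] at hmem
        exact hmem
    · intro V₁ h₁ V₂ h₂ h
      exact vsub_comap_injective_of_purelyInseparable h

theorem stmt13 (F L : Type*) [Field F] [Field L] [Algebra F L]
    -- `L` is a finitely generated field extension of `F`: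
    (hfg : ∃ s : Finset L, IntermediateField.adjoin F (s : Set L) = ⊤)
    -- of transcendence degree exactly 1:
    (htr1 : ∃ x : L, Transcendental F x)
    (htr2 : ∀ x y : L, ¬ AlgebraicIndependent F ![x, y]) :
    TopologicalSpace.NoetherianSpace (zarSet F L) := by
  classical
  have key : ∀ x : L, (zarSet F L \ {V : ValuationSubring L | x ∈ V}).Finite := by
    intro x
    have h := keyFinite F L hfg htr2 x
    have heq : zarSet F L \ {V : ValuationSubring L | x ∈ V}
        = {V : ValuationSubring L | (∀ d : F, algebraMap F L d ∈ V) ∧ x ∉ V} := by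
      ext V
      simp [zarSet, Set.mem_diff]
    rw [heq]
    exact h
  have gen : ∀ O : Set (ValuationSubring L),
      TopologicalSpace.GenerateOpen
        {U | ∃ x : L, U = {V : ValuationSubring L | x ∈ V}} O →
      (O ∩ zarSet F L = ∅ ∨ (zarSet F L \ O).Finite) := by
    intro O hO
    induction hO with
    | basic U hU =>
      obtain ⟨x, rfl⟩ := hU
      exact Or.inr (key x)
    | univ => right; simp
    | inter U₁ U₂ h₁ h₂ ih₁ ih₂ =>
      rcases ih₁ with h | h
      · left
        rw [← Set.subset_empty_iff, ← h]
        exact Set.inter_subset_inter_left _ (Set.inter_subset_left)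
      rcases ih₂ with h' | h'
      · left
        rw [← Set.subset_empty_iff, ← h']
        exact Set.inter_subset_inter_left _ (Set.inter_subset_right)
      · right
        have : zarSet F L \ (U₁ ∩ U₂) ⊆ (zarSet F L \ U₁) ∪ (zarSet F L \ U₂) := by
          intro V hV
          by_cases hV1 : V ∈ U₁
          · exact Or.inr ⟨hV.1, fun h2 => hV.2 ⟨hV1, h2⟩⟩
          · exact Or.inl ⟨hV.1, hV1⟩
        exact (h.union h').subset this
    | sUnion T hT ih =>
      by_cases hall : ∀ t ∈ T, t ∩ zarSet F L = ∅
      · left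
        rw [← Set.subset_empty_iff]
        rintro V ⟨⟨t, htT, hVt⟩, hVz⟩
        exact (hall t htT) ▸ (⟨hVt, hVz⟩ : V ∈ t ∩ zarSet F L)
      · right
        push_neg at hall
        obtain ⟨t, htT, htne⟩ := hall
        have hfin : (zarSet F L \ t).Finite := (ih t htT).resolve_left (Set.nonempty_iff_ne_empty.mp htne)
        exact hfin.subset fun V hV => ⟨hV.1, fun h => hV.2 ⟨t, htT, h⟩⟩
  apply noetherianSpace_of_isOpen_empty_or_compl_finite
  intro U hU
  obtain ⟨O, hO, rfl⟩ := isOpen_induced_iff.mp hU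
  rcases gen O hO with h | h
  · left
    rw [← Set.subset_empty_iff]
    rintro ⟨V, hV⟩ hVO
    rw [← Set.subset_empty_iff] at h
    exact h ⟨hVO, hV⟩
  · right
    have hEq : (Subtype.val ⁻¹' O : Set (zarSet F L))ᶜ = Subtype.val ⁻¹' (zarSet F L \ O) := by
      ext ⟨V, hV⟩
      simp [hV]
    rw [hEq]
    exact h.preimage (Subtype.val_injective.injOn)
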